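/- (Invariant of the abstract path-fixing algorithm) After the abstract fixing procedure processes the nodes p_1, ..., p_i of a path P (at each step j ≤ i, pushing a maximum flow with limit |inflow(p_j)| from p_j to p_{j+1} if inflow(p_j) > 0, or from p_{j+1} to p_j if inflow(p_j) < 0, while darts between unprocessed consecutive nodes have capacity increased by M, the sum of all original capacities), the following holds: (1) for j ≤ i and j' > j, if p_j has positive inflow there is no residual path from p_j to p_{j'}, and if p_j has negative inflow there is no residual path from p_{j'} to p_j; (2) for j, j' ≤ i, if p_j has positive inflow and p_{j'} has negative inflow then there is no residual p_j-to-p_{j'} path. -/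

import Mathlib

/-- A directed graph given by darts: each dart has a tail, a head, and a reverse dart. -/
structure Dgraph (V D : Type) where
  tail : D → V
  head : D → V
  rev : D → D
  rev_rev : ∀ d, rev (rev d) = d
  tail_rev : ∀ d, tail (rev d) = head d
  head_rev : ∀ d, head (rev d) = tail d

namespace Dgraph

variable {V D : Type}

/-- an antisymmetric flow assignment -/
def Antisym (G : Dgraph V D) (f : D → ℝ) : Prop :=
  ∀ d, f (G.rev d) = - f d

/-- net inflow of a flow assignment at a node -/
noncomputable def inflow [Fintype D] [DecidableEq V] (G : Dgraph V D) (f : D → ℝ) (v : V) : ℝ :=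
  ∑ d ∈ Finset.univ.filter (fun d => G.head d = v), f d

/-- one step along a dart of strictly positive capacity -/
def ResStep (G : Dgraph V D) (cap : D → ℝ) (u v : V) : Prop :=
  ∃ d, G.tail d = u ∧ G.head d = v ∧ 0 < cap d

/-- existence of a path all of whose darts have strictly positive capacity -/
def ResReach (G : Dgraph V D) (cap : D → ℝ) (u v : V) : Prop :=
  Relation.ReflTransGen (G.ResStep cap) u v

/-- a pseudoflow: antisymmetric and respecting all capacities -/
def Pseudoflow (G : Dgraph V D) (c f : D → ℝ) : Prop :=
  G.Antisym f ∧ ∀ d, f d ≤ c d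

end Dgraph

namespace Dgraph

variable {V D : Type} [Fintype D] [DecidableEq V] [DecidableEq D]

/-- `g` is a maximum feasible flow from `a` to `b` with limit `x` (w.r.t. capacities `cap`). -/
def MaxLimFlow (G : Dgraph V D) (cap : D → ℝ) (a b : V) (x : ℝ) (g : D → ℝ) : Prop :=
  G.Antisym g ∧ (∀ d, g d ≤ cap d) ∧
  (∀ v, v ≠ a → v ≠ b → G.inflow g v = 0) ∧
  G.inflow g b ≤ x ∧
  ∀ g' : D → ℝ, G.Antisym g' → (∀ d, g' d ≤ cap d) →
    (∀ v, v ≠ a → v ≠ b → G.inflow g' v = 0) →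
    G.inflow g' b ≤ x → G.inflow g' b ≤ G.inflow g b

/-- capacities at stage `i` of the abstract fixing procedure: darts of the path with
index at least `i` (and their reverses) still carry the extra capacity `M`. -/
noncomputable def fixCaps (G : Dgraph V D) (c0 : D → ℝ) (M : ℝ) {k : ℕ}
    (dP : Fin k → D) (i : ℕ) (d : D) : ℝ :=
  c0 d + (if ∃ j : Fin k, i ≤ (j : ℕ) ∧ (d = dP j ∨ d = G.rev (dP j)) then M else 0)

/-- restoring the capacity of the dart `d0` and of `rev d0`: truncate the flow on each
of them in turn to the (restored) capacity `κ`, keeping antisymmetry. -/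
noncomputable def truncAt (G : Dgraph V D) (κ : D → ℝ) (f : D → ℝ) (d0 : D) : D → ℝ :=
  let m := min (f d0) (κ d0)
  let f1 := Function.update (Function.update f d0 m) (G.rev d0) (-m)
  let m2 := min (f1 (G.rev d0)) (κ (G.rev d0))
  Function.update (Function.update f1 (G.rev d0) m2) d0 (-m2)

/-- one iteration of the abstract fixing procedure at position `i`: restore the
capacities of `d_i` and `rev d_i`, then push a maximum flow with limit `|inflow(p_i)|`
from `p_i` to `p_{i+1}` (if the inflow at `p_i` is positive) or from `p_{i+1}` to `p_i`
(otherwise). -/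
noncomputable def FixStep (G : Dgraph V D) (c0 : D → ℝ) (M : ℝ) {k : ℕ}
    (p : Fin (k+1) → V) (dP : Fin k → D) (i : Fin k) (f f' : D → ℝ) : Prop :=
  ∃ t g : D → ℝ,
    t = G.truncAt (G.fixCaps c0 M dP ((i : ℕ) + 1)) f (dP i) ∧
    ((0 < G.inflow t (p i.castSucc) ∧
        G.MaxLimFlow (fun d => G.fixCaps c0 M dP ((i : ℕ) + 1) d - t d)
          (p i.castSucc) (p i.succ) (G.inflow t (p i.castSucc)) g) ∨
     (G.inflow t (p i.castSucc) ≤ 0 ∧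
        G.MaxLimFlow (fun d => G.fixCaps c0 M dP ((i : ℕ) + 1) d - t d)
          (p i.succ) (p i.castSucc) (-(G.inflow t (p i.castSucc))) g)) ∧
    f' = fun d => t d + g d

end Dgraph

namespace Dgraph

open Finset
set_option linter.unusedSectionVars false

variable {V D : Type} [Fintype D] [DecidableEq V] [DecidableEq D]

open Classical in
lemma sum_antisym_zero (G : Dgraph V D) {g : D → ℝ} (hg : G.Antisym g)
    (s : Finset D) (hs : ∀ d ∈ s, G.rev d ∈ s) : ∑ d ∈ s, g d = 0 := by
  refine Finset.sum_involution (fun d _ => G.rev d) (fun d hd => ?_)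
    (fun d hd h => ?_) (fun d hd => hs d hd) (fun d hd => G.rev_rev d)
  · rw [hg d]; ring
  · intro he
    apply h
    have he' : G.rev d = d := he
    have := hg d
    rw [he'] at this
    linarith

lemma inflow_add (G : Dgraph V D) (f g : D → ℝ) (v : V) :
    G.inflow (fun d => f d + g d) v = G.inflow f v + G.inflow g v := by
  simp [inflow, Finset.sum_add_distrib]

lemma inflow_sub (G : Dgraph V D) (f g : D → ℝ) (v : V) :
    G.inflow (fun d => f d - g d) v = G.inflow f v - G.inflow g v := by
  simp [inflow, Finset.sum_sub_distrib]

lemma inflow_congr (G : Dgraph V D) {f g : D → ℝ} {v : V}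
    (h : ∀ d, G.head d = v → f d = g d) : G.inflow f v = G.inflow g v := by
  unfold inflow
  exact Finset.sum_congr rfl (fun d hd => h d (by simpa using hd))

lemma inflow_eq_zero_of_head (G : Dgraph V D) (g : D → ℝ) {v : V}
    (h : ∀ d, G.head d ≠ v) : G.inflow g v = 0 := by
  unfold inflow
  rw [Finset.filter_false_of_mem (fun d _ => h d), Finset.sum_empty]

open Classical in
lemma sum_filter_head (G : Dgraph V D) (g : D → ℝ) (q : V → Prop) :
    ∑ d ∈ Finset.univ.filter (fun d => q (G.head d)), g d
      = ∑ v ∈ (Finset.univ.image G.head).filter q, G.inflow g v := by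
  rw [← Finset.sum_fiberwise_of_maps_to
    (g := G.head) (t := (Finset.univ.image G.head).filter q)
    (fun d hd => by simp at hd ⊢; exact hd)]
  refine Finset.sum_congr rfl (fun v hv => ?_)
  unfold inflow
  refine Finset.sum_congr ?_ (fun _ _ => rfl)
  ext d
  simp only [Finset.mem_filter, Finset.mem_univ, true_and]
  constructor
  · rintro ⟨_, h2⟩; exact h2
  · intro h2
    refine ⟨?_, h2⟩
    rw [h2]
    simpa using (Finset.mem_filter.mp hv).2

open Classical in
lemma sum_head_mem (G : Dgraph V D) (g : D → ℝ) {a b : V} (hab : a ≠ b)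
    (hcons : ∀ v, v ≠ a → v ≠ b → G.inflow g v = 0) (S : Set V) :
    ∑ d ∈ Finset.univ.filter (fun d => G.head d ∈ S), g d
      = (if a ∈ S then G.inflow g a else 0) + (if b ∈ S then G.inflow g b else 0) := by
  rw [G.sum_filter_head g (· ∈ S)]
  have : ∀ v ∈ (Finset.univ.image G.head).filter (· ∈ S),
      G.inflow g v = (if a = v then G.inflow g a else 0) + (if b = v then G.inflow g b else 0) := by
    intro v hv
    by_cases h1 : v = a
    · subst h1; simp [Ne.symm hab]
    · by_cases h2 : v = b
      · subst h2; simp [hab, Ne.symm h1]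
      · rw [hcons v h1 h2, if_neg (fun h => h1 h.symm), if_neg (fun h => h2 h.symm)]; simp
  rw [Finset.sum_congr rfl this, Finset.sum_add_distrib,
    Finset.sum_ite_eq, Finset.sum_ite_eq]
  have key : ∀ w : V, (if w ∈ (Finset.univ.image G.head).filter (· ∈ S) then G.inflow g w else 0)
      = (if w ∈ S then G.inflow g w else 0) := by
    intro w
    by_cases hw : w ∈ S
    · by_cases hw2 : w ∈ Finset.univ.image G.head
      · rw [if_pos (by simp [hw, hw2]), if_pos hw]
      · rw [if_neg (by simp [hw2]), if_pos hw]
        refine (G.inflow_eq_zero_of_head g (fun d hd => ?_)).symm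
        exact hw2 (by simp [← hd])
    · rw [if_neg (by simp [hw]), if_neg hw]
  rw [key, key]

end Dgraph
namespace Dgraph

open Finset
set_option linter.unusedSectionVars false

variable {V D : Type} [Fintype D] [DecidableEq V] [DecidableEq D]

open Classical in
/-- the flow into a node set equals the flow across its boundary -/
lemma cut_sum (G : Dgraph V D) {g : D → ℝ} (hg : G.Antisym g) (S : Set V) :
    ∑ d ∈ Finset.univ.filter (fun d => G.head d ∈ S ∧ G.tail d ∉ S), g d
      = ∑ d ∈ Finset.univ.filter (fun d => G.head d ∈ S), g d := by
  have hsplit : Finset.univ.filter (fun d => G.head d ∈ S)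
      = (Finset.univ.filter (fun d => G.head d ∈ S ∧ G.tail d ∈ S)) ∪
        (Finset.univ.filter (fun d => G.head d ∈ S ∧ G.tail d ∉ S)) := by
    ext d
    by_cases h : G.tail d ∈ S <;> simp [h]
  rw [hsplit, Finset.sum_union (by
    rw [Finset.disjoint_filter]
    rintro d _ ⟨h1, h2⟩ ⟨h3, h4⟩
    exact h4 h2)]
  have hz : ∑ d ∈ Finset.univ.filter (fun d => G.head d ∈ S ∧ G.tail d ∈ S), g d = 0 := by
    refine G.sum_antisym_zero hg _ (fun d hd => ?_)
    simp only [Finset.mem_filter, Finset.mem_univ, true_and] at hd ⊢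
    rw [G.head_rev, G.tail_rev]
    exact ⟨hd.2, hd.1⟩
  rw [hz, zero_add]

/-- sum of the inflows at the two terminals of a flow vanishes -/
lemma inflow_pair (G : Dgraph V D) {g : D → ℝ} (hg : G.Antisym g) {a b : V} (hab : a ≠ b)
    (hcons : ∀ v, v ≠ a → v ≠ b → G.inflow g v = 0) :
    G.inflow g a + G.inflow g b = 0 := by
  have h1 := G.sum_head_mem g hab hcons Set.univ
  simp only [Set.mem_univ, if_true] at h1
  have h2 : ∑ d ∈ Finset.univ.filter (fun d => G.head d ∈ Set.univ), g d = 0 := by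
    rw [Finset.filter_true_of_mem (by simp)]
    exact G.sum_antisym_zero hg _ (by simp)
  simp only [Set.mem_univ] at h2 h1
  linarith

lemma reach_mono (G : Dgraph V D) {c c' : D → ℝ} (h : ∀ d, 0 < c d → 0 < c' d) {u v : V} :
    G.ResReach c u v → G.ResReach c' u v :=
  Relation.ReflTransGen.mono (p := G.ResStep c') (fun x y ⟨d, h1, h2, h3⟩ => ⟨d, h1, h2, h d h3⟩) u v

lemma exists_cross_into (G : Dgraph V D) (c : D → ℝ) {u v : V}
    (h : G.ResReach c u v) (S : Set V) (hu : u ∉ S) :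
    v ∈ S → ∃ d, 0 < c d ∧ G.tail d ∉ S ∧ G.head d ∈ S ∧ G.ResReach c u (G.tail d) := by
  induction h with
  | refl => exact fun hv => absurd hv hu
  | @tail w x hw hwx ih =>
    intro hv
    by_cases hwS : w ∈ S
    · exact ih hwS
    · obtain ⟨d, hdt, hdh, hdc⟩ := hwx
      exact ⟨d, hdc, by rw [hdt]; exact hwS, by rw [hdh]; exact hv, by rw [hdt]; exact hw⟩

lemma exists_cross_out (G : Dgraph V D) (c : D → ℝ) {u v : V}
    (h : G.ResReach c u v) (S : Set V) (hv : v ∉ S) :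
    u ∈ S → ∃ d, 0 < c d ∧ G.tail d ∈ S ∧ G.head d ∉ S ∧ G.ResReach c (G.head d) v := by
  induction h using Relation.ReflTransGen.head_induction_on with
  | refl => exact fun hu => absurd hu hv
  | @head w x hwx hx ih =>
    intro hw
    by_cases hxS : x ∈ S
    · exact ih hxS
    · obtain ⟨d, hdt, hdh, hdc⟩ := hwx
      exact ⟨d, hdc, by rw [hdt]; exact hw, by rw [hdh]; exact hxS, by rw [hdh]; exact hx⟩

end Dgraph
namespace Dgraph

open Finset
set_option linter.unusedSectionVars false
set_option linter.unusedVariables false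

variable {V D : Type} [Fintype D] [DecidableEq V] [DecidableEq D]

open Classical in
/-- pushing a flow between `a` and `b` creates no new residual reachability from `s`,
provided `s` could not reach the sink `b`. -/
lemma push_preserve_forward (G : Dgraph V D) {c g : D → ℝ} {a b s : V}
    (hg : G.Antisym g) (hfeas : ∀ d, g d ≤ c d)
    (hcons : ∀ v, v ≠ a → v ≠ b → G.inflow g v = 0) (hab : a ≠ b)
    (hval : 0 ≤ G.inflow g b)
    (hnb : ¬ G.ResReach c s b) :
    ∀ x, G.ResReach (fun d => c d - g d) s x → G.ResReach c s x := by
  intro x hx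
  by_contra hxR
  set R : Set V := {y | G.ResReach c s y} with hR
  have hsR : s ∈ R := Relation.ReflTransGen.refl
  obtain ⟨d0, hd0c, hd0t, hd0h, -⟩ :=
    G.exists_cross_into _ hx Rᶜ (by simpa using hsR) hxR
  simp only [Set.mem_compl_iff, not_not] at hd0t hd0h
  set Out := Finset.univ.filter (fun d => G.tail d ∈ R ∧ G.head d ∉ R) with hOut
  have hsat : ∀ d ∈ Out, c d ≤ 0 := by
    intro d hd
    simp only [hOut, Finset.mem_filter, Finset.mem_univ, true_and] at hd
    by_contra hpos
    exact hd.2 (Relation.ReflTransGen.tail hd.1 ⟨d, rfl, rfl, lt_of_not_ge hpos⟩)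
  have hd0Out : d0 ∈ Out := by simp [hOut, hd0t, hd0h]
  have hd0g : g d0 < 0 := by
    have := hsat d0 hd0Out
    have hc' : 0 < c d0 - g d0 := hd0c
    linarith
  have hOutNeg : ∑ d ∈ Out, g d < 0 := by
    rw [← Finset.add_sum_erase _ _ hd0Out]
    have : ∑ d ∈ Out.erase d0, g d ≤ 0 :=
      Finset.sum_nonpos (fun d hd => le_trans (hfeas d) (hsat d (Finset.mem_of_mem_erase hd)))
    linarith
  set Inn := Finset.univ.filter (fun d => G.head d ∈ R ∧ G.tail d ∉ R) with hInn
  have himg : Inn = Out.image G.rev := by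
    ext d
    simp only [hInn, hOut, Finset.mem_filter, Finset.mem_univ, true_and, Finset.mem_image]
    constructor
    · rintro ⟨h1, h2⟩
      exact ⟨G.rev d, ⟨by rwa [G.tail_rev], by rwa [G.head_rev]⟩, G.rev_rev d⟩
    · rintro ⟨e, ⟨h1, h2⟩, rfl⟩
      rw [G.head_rev, G.tail_rev]
      exact ⟨h1, h2⟩
  have hInnSum : ∑ d ∈ Inn, g d = - ∑ d ∈ Out, g d := by
    rw [himg, Finset.sum_image (fun x _ y _ h => by
      have := congrArg G.rev h; rwa [G.rev_rev, G.rev_rev] at this)]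
    rw [show (∑ e ∈ Out, g (G.rev e)) = ∑ e ∈ Out, -g e from
      Finset.sum_congr rfl (fun d _ => hg d)]
    exact Finset.sum_neg_distrib _
  have hcut : ∑ d ∈ Inn, g d ≤ 0 := by
    have h1 := G.cut_sum hg R
    have h2 := G.sum_head_mem g hab hcons R
    have hbR : b ∉ R := hnb
    rw [if_neg hbR] at h2
    have hpair := G.inflow_pair hg hab hcons
    by_cases haR : a ∈ R
    · rw [if_pos haR] at h2
      rw [hInn, h1, h2]
      linarith
    · rw [if_neg haR] at h2
      rw [hInn, h1, h2]
      linarith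
  linarith [hInnSum, hOutNeg, hcut]

open Classical in
/-- pushing a flow between `a` and `b` creates no new residual reachability towards `s`,
provided the source `a` could not reach `s`. -/
lemma push_preserve_backward (G : Dgraph V D) {c g : D → ℝ} {a b s : V}
    (hg : G.Antisym g) (hfeas : ∀ d, g d ≤ c d)
    (hcons : ∀ v, v ≠ a → v ≠ b → G.inflow g v = 0) (hab : a ≠ b)
    (hval : 0 ≤ G.inflow g b)
    (hna : ¬ G.ResReach c a s) :
    ∀ x, G.ResReach (fun d => c d - g d) x s → G.ResReach c x s := by
  intro x hx
  by_contra hxR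
  set R : Set V := {y | G.ResReach c y s} with hR
  have hsR : s ∈ R := Relation.ReflTransGen.refl
  obtain ⟨d0, hd0c, hd0t, hd0h, -⟩ := G.exists_cross_into _ hx R hxR hsR
  set Inn := Finset.univ.filter (fun d => G.head d ∈ R ∧ G.tail d ∉ R) with hInn
  have hsat : ∀ d ∈ Inn, c d ≤ 0 := by
    intro d hd
    simp only [hInn, Finset.mem_filter, Finset.mem_univ, true_and] at hd
    by_contra hpos
    exact hd.2 (Relation.ReflTransGen.head ⟨d, rfl, rfl, lt_of_not_ge hpos⟩ hd.1)
  have hd0Inn : d0 ∈ Inn := by simp [hInn, hd0t, hd0h]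
  have hd0g : g d0 < 0 := by
    have := hsat d0 hd0Inn
    have hc' : 0 < c d0 - g d0 := hd0c
    linarith
  have hInnNeg : ∑ d ∈ Inn, g d < 0 := by
    rw [← Finset.add_sum_erase _ _ hd0Inn]
    have : ∑ d ∈ Inn.erase d0, g d ≤ 0 :=
      Finset.sum_nonpos (fun d hd => le_trans (hfeas d) (hsat d (Finset.mem_of_mem_erase hd)))
    linarith
  have hcut : 0 ≤ ∑ d ∈ Inn, g d := by
    have h1 := G.cut_sum hg R
    have h2 := G.sum_head_mem g hab hcons R
    have haR : a ∉ R := hna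
    rw [if_neg haR] at h2
    by_cases hbR : b ∈ R
    · rw [if_pos hbR] at h2
      rw [hInn, h1, h2]
      linarith
    · rw [if_neg hbR] at h2
      rw [hInn, h1, h2]
      linarith
  linarith

end Dgraph
namespace Dgraph

open Finset
set_option linter.unusedSectionVars false
set_option linter.unusedVariables false

variable {V D : Type} [Fintype D] [DecidableEq V] [DecidableEq D]

lemma exists_walk_list (G : Dgraph V D) (c : D → ℝ) {u v : V} (h : G.ResReach c u v) :
    ∃ L : List D, (∀ d ∈ L, 0 < c d) ∧
      ∀ w : V, ((L.filter (fun d => G.head d = w)).length : ℤ)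
          - ((L.filter (fun d => G.tail d = w)).length : ℤ)
        = (if w = v then 1 else 0) - (if w = u then 1 else 0) := by
  induction h with
  | refl => exact ⟨[], by simp, fun w => by simp⟩
  | @tail x y hx hxy ih =>
    obtain ⟨L, hL1, hL2⟩ := ih
    obtain ⟨d, hdt, hdh, hdc⟩ := hxy
    refine ⟨L ++ [d], ?_, fun w => ?_⟩
    · intro e he
      rcases List.mem_append.mp he with h | h
      · exact hL1 e h
      · simp only [List.mem_singleton] at h
        subst h; exact hdc
    · have h2 := hL2 w
      have e1 : ((L ++ [d]).filter (fun e => G.head e = w)).length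
          = (L.filter (fun e => G.head e = w)).length + (if G.head d = w then 1 else 0) := by
        rw [List.filter_append, List.length_append, List.filter_singleton]
        by_cases h3 : G.head d = w <;> simp [h3]
      have e2 : ((L ++ [d]).filter (fun e => G.tail e = w)).length
          = (L.filter (fun e => G.tail e = w)).length + (if G.tail d = w then 1 else 0) := by
        rw [List.filter_append, List.length_append, List.filter_singleton]
        by_cases h4 : G.tail d = w <;> simp [h4]
      have hy1 : (if w = y then (1:ℤ) else 0) = (if G.head d = w then 1 else 0) := by
        by_cases h3 : G.head d = w
        · rw [if_pos h3, if_pos (by rw [← hdh, h3])]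
        · rw [if_neg h3, if_neg (fun hw => h3 (by rw [hdh, hw]))]
      have hx1 : (if w = x then (1:ℤ) else 0) = (if G.tail d = w then 1 else 0) := by
        by_cases h4 : G.tail d = w
        · rw [if_pos h4, if_pos (by rw [← hdt, h4])]
        · rw [if_neg h4, if_neg (fun hw => h4 (by rw [hdt, hw]))]
      rw [e1, e2, hy1]
      rw [hx1] at h2
      push_cast
      push_cast at h2
      linarith [h2]

end Dgraph
namespace Dgraph

open Finset
set_option linter.unusedSectionVars false
set_option linter.unusedVariables false

variable {V D : Type} [Fintype D] [DecidableEq V] [DecidableEq D]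

lemma sum_count_filter (L : List D) (p : D → Prop) [DecidablePred p] :
    ∑ d ∈ Finset.univ.filter (fun d => p d), (L.count d : ℝ)
      = ((L.filter (fun d => p d)).length : ℝ) := by
  induction L with
  | nil => simp
  | cons a L ih =>
    have hc : ∀ d : D, ((a :: L).count d : ℝ) = (L.count d : ℝ) + (if d = a then 1 else 0) := by
      intro d
      rw [List.count_cons]
      by_cases h : d = a
      · simp [h]
      · simp [h, (Ne.symm h : ¬ a = d)]
    rw [Finset.sum_congr rfl (fun d _ => hc d), Finset.sum_add_distrib, ih,
      Finset.sum_ite_eq' (Finset.univ.filter (fun d => p d)) a (fun _ => (1:ℝ))]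
    rw [List.filter_cons]
    by_cases h : p a <;> simp [h]

open Classical in
lemma inflow_augment (G : Dgraph V D) (L : List D) (ε : ℝ) (w : V) :
    G.inflow (fun d => ε * ((L.count d : ℝ) - (L.count (G.rev d) : ℝ))) w
      = ε * (((L.filter (fun d => G.head d = w)).length : ℝ)
          - ((L.filter (fun d => G.tail d = w)).length : ℝ)) := by
  unfold inflow
  rw [← Finset.mul_sum]
  congr 1
  rw [Finset.sum_sub_distrib]
  congr 1
  · exact sum_count_filter L (fun d => G.head d = w)
  · have himg : Finset.univ.filter (fun d => G.tail d = w)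
        = (Finset.univ.filter (fun d => G.head d = w)).image G.rev := by
      ext d
      simp only [Finset.mem_filter, Finset.mem_univ, true_and, Finset.mem_image]
      constructor
      · intro h1
        exact ⟨G.rev d, by rwa [G.head_rev], G.rev_rev d⟩
      · rintro ⟨e, h1, rfl⟩
        rwa [G.tail_rev]
    rw [← sum_count_filter L (fun d => G.tail d = w), himg,
      Finset.sum_image (fun x _ y _ h => by
        have := congrArg G.rev h; rwa [G.rev_rev, G.rev_rev] at this)]

open Classical in
/-- if a maximum flow with limit has value strictly below the limit, there is
no residual path from source to sink -/
lemma max_no_augpath (G : Dgraph V D) {cap : D → ℝ} {a b : V} {x : ℝ} {g : D → ℝ}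
    (hab : a ≠ b) (hmax : G.MaxLimFlow cap a b x g) (hlt : G.inflow g b < x) :
    ¬ G.ResReach (fun d => cap d - g d) a b := by
  intro hreach
  obtain ⟨ganti, gle, gcons, gx, gmax⟩ := hmax
  set c' : D → ℝ := fun d => cap d - g d with hc'
  have hc'nonneg : ∀ d, 0 ≤ c' d := fun d => by simp [hc', gle d]
  obtain ⟨L, hL1, hL2⟩ := G.exists_walk_list c' hreach
  have hLne : L ≠ [] := by
    intro h
    have := hL2 b
    rw [h] at this
    simp [Ne.symm hab] at this
  have hLpos : 0 < (L.length : ℝ) := by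
    have := List.length_pos_iff.mpr hLne
    exact_mod_cast this
  have hmingen : ∀ L' : List D, (∀ d ∈ L', 0 < c' d) → ∃ ε0 > 0, ∀ d ∈ L', ε0 ≤ c' d := by
    intro L'
    induction L' with
    | nil => exact fun _ => ⟨1, one_pos, by simp⟩
    | cons e L' ih =>
      intro h
      obtain ⟨ε0, h1, h2⟩ := ih (fun d hd => h d (List.mem_cons_of_mem e hd))
      refine ⟨min ε0 (c' e), lt_min h1 (h e (List.mem_cons_self (a := e) (l := L'))), fun d hd => ?_⟩
      rcases List.mem_cons.mp hd with hh | hh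
      · rw [hh]; exact min_le_right _ _
      · exact le_trans (min_le_left _ _) (h2 d hh)
  obtain ⟨ε0, hε0, hε0le⟩ := hmingen L hL1
  set ε : ℝ := min (ε0 / L.length) (x - G.inflow g b) with hε
  have hεpos : 0 < ε := lt_min (by positivity) (by linarith)
  set A : D → ℝ := fun d => ε * ((L.count d : ℝ) - (L.count (G.rev d) : ℝ)) with hA
  have hAanti : G.Antisym A := by
    intro d
    simp only [hA, G.rev_rev]
    ring
  have hAle : ∀ d, A d ≤ c' d := by
    intro d
    by_cases hd : d ∈ L
    · have h1 : A d ≤ ε * (L.count d : ℝ) := by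
        simp only [hA]
        have : (0:ℝ) ≤ (L.count (G.rev d) : ℝ) := by positivity
        nlinarith
      have h2 : (L.count d : ℝ) ≤ (L.length : ℝ) := by
        exact_mod_cast (List.count_le_length (a := d) (l := L))
      have h3 : ε * (L.count d : ℝ) ≤ ε * (L.length : ℝ) := by nlinarith
      have h4 : ε * (L.length : ℝ) ≤ ε0 := by
        have : ε ≤ ε0 / L.length := min_le_left _ _
        rw [div_eq_mul_inv] at this
        calc ε * (L.length : ℝ) ≤ ε0 * (L.length:ℝ)⁻¹ * (L.length : ℝ) := by nlinarith
        _ = ε0 := by field_simp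
      linarith [hε0le d hd]
    · have : L.count d = 0 := List.count_eq_zero.mpr hd
      have h1 : A d ≤ 0 := by
        simp only [hA, this]
        push_cast
        have : (0:ℝ) ≤ (L.count (G.rev d) : ℝ) := by positivity
        nlinarith
      linarith [hc'nonneg d]
  have hAinfl : ∀ w, G.inflow A w
      = ε * ((if w = b then 1 else 0) - (if w = a then 1 else 0)) := by
    intro w
    rw [hA, G.inflow_augment L ε w]
    congr 1
    have := hL2 w
    have h2 : ((L.filter (fun d => G.head d = w)).length : ℝ)
        - ((L.filter (fun d => G.tail d = w)).length : ℝ)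
        = ((if w = b then (1:ℤ) else 0) - (if w = a then 1 else 0) : ℤ) := by
      rw [← this]
      push_cast
      ring
    rw [h2]
    push_cast
    by_cases h3 : w = b <;> by_cases h4 : w = a <;> simp [h3, h4]
  have hmaxed := gmax (fun d => g d + A d)
    (fun d => by
      show g (G.rev d) + A (G.rev d) = -(g d + A d)
      rw [ganti d, hAanti d]; ring)
    (fun d => by
      show g d + A d ≤ cap d
      have h5 := hAle d
      have h6 : c' d = cap d - g d := rfl
      rw [h6] at h5
      linarith)
    (fun v hva hvb => by
      rw [G.inflow_add, gcons v hva hvb, hAinfl v, if_neg hvb, if_neg hva]; ring)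
    (by
      rw [G.inflow_add, hAinfl b, if_pos rfl, if_neg (Ne.symm hab)]
      have : ε ≤ x - G.inflow g b := min_le_right _ _
      linarith)
  rw [G.inflow_add, hAinfl b, if_pos rfl, if_neg (Ne.symm hab)] at hmaxed
  linarith

end Dgraph
namespace Dgraph

open Finset
set_option linter.unusedSectionVars false
set_option linter.unusedVariables false

variable {V D : Type} [Fintype D] [DecidableEq V] [DecidableEq D]

lemma truncAt_eval (G : Dgraph V D) (κ f : D → ℝ) (d0 : D) (hne : G.rev d0 ≠ d0) :
    G.truncAt κ f d0 d0 = -(min (-(min (f d0) (κ d0))) (κ (G.rev d0)))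
  ∧ G.truncAt κ f d0 (G.rev d0) = min (-(min (f d0) (κ d0))) (κ (G.rev d0))
  ∧ ∀ d, d ≠ d0 → d ≠ G.rev d0 → G.truncAt κ f d0 d = f d := by
  unfold truncAt
  simp only [Function.update_apply, if_pos rfl]
  refine ⟨?_, ?_, ?_⟩
  · simp [hne, Ne.symm hne]
  · simp [hne, Ne.symm hne]
  · intro d h1 h2
    simp [hne, Ne.symm hne, h1, h2]

lemma truncAt_antisym (G : Dgraph V D) (κ : D → ℝ) {f : D → ℝ} (hf : G.Antisym f)
    (d0 : D) (hne : G.rev d0 ≠ d0) : G.Antisym (G.truncAt κ f d0) := by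
  obtain ⟨e1, e2, e3⟩ := G.truncAt_eval κ f d0 hne
  intro d
  by_cases h1 : d = d0
  · rw [h1, e1, e2]; try ring
  · by_cases h2 : d = G.rev d0
    · rw [h2, G.rev_rev, e1, e2]; try ring
    · have h3 : G.rev d ≠ d0 := fun h => h2 (by rw [← h, G.rev_rev])
      have h4 : G.rev d ≠ G.rev d0 := fun h => h1 (by
        have := congrArg G.rev h; rwa [G.rev_rev, G.rev_rev] at this)
      rw [e3 d h1 h2, e3 _ h3 h4, hf d]

lemma truncAt_le (G : Dgraph V D) {κ f : D → ℝ} (d0 : D) (hne : G.rev d0 ≠ d0)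
    (hκ : 0 ≤ κ d0 + κ (G.rev d0)) (hf : ∀ d, d ≠ d0 → d ≠ G.rev d0 → f d ≤ κ d) :
    ∀ d, G.truncAt κ f d0 d ≤ κ d := by
  obtain ⟨e1, e2, e3⟩ := G.truncAt_eval κ f d0 hne
  intro d
  by_cases h1 : d = d0
  · rw [h1, e1]
    have h5 : min (f d0) (κ d0) ≤ κ d0 := min_le_right _ _
    rcases min_le_iff.mp (le_refl (min (-(min (f d0) (κ d0))) (κ (G.rev d0)))) with h | h
    · linarith [min_le_left (-(min (f d0) (κ d0))) (κ (G.rev d0)), h5]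
    · linarith [min_le_right (-(min (f d0) (κ d0))) (κ (G.rev d0))]
  · by_cases h2 : d = G.rev d0
    · rw [h2, e2]; exact min_le_right _ _
    · rw [e3 d h1 h2]; exact hf d h1 h2

/-- restoring capacities and truncating only shrinks the set of residual darts -/
lemma truncAt_res (G : Dgraph V D) {κ ca f : D → ℝ} {M : ℝ} (hM : 0 ≤ M)
    (d0 : D) (hne : G.rev d0 ≠ d0) (hf : G.Antisym f)
    (hca : ∀ d, d ≠ d0 → d ≠ G.rev d0 → ca d = κ d)
    (hca0 : ca d0 = κ d0 + M) (hcar : ca (G.rev d0) = κ (G.rev d0) + M) :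
    ∀ d, 0 < κ d - G.truncAt κ f d0 d → 0 < ca d - f d := by
  obtain ⟨e1, e2, e3⟩ := G.truncAt_eval κ f d0 hne
  intro d hres
  by_cases h1 : d = d0
  · rw [h1] at hres ⊢
    rw [e1] at hres
    have h2 : min (f d0) (κ d0) < κ d0 := by
      rcases le_or_gt (κ d0) (min (f d0) (κ d0)) with h | h
      · exfalso
        have := min_le_left (-(min (f d0) (κ d0))) (κ (G.rev d0))
        linarith
      · exact h
    have h3 : f d0 < κ d0 := by
      rcases min_cases (f d0) (κ d0) with ⟨h4, h5⟩ | ⟨h4, h5⟩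
      · rw [h4] at h2; exact h2
      · exfalso; rw [h4] at h2; exact lt_irrefl _ h2
    rw [hca0]
    linarith
  · by_cases h2 : d = G.rev d0
    · rw [h2] at hres ⊢
      rw [e2] at hres
      have h3 : -(min (f d0) (κ d0)) < κ (G.rev d0) := by
        rcases le_or_gt (κ (G.rev d0)) (-(min (f d0) (κ d0))) with h | h
        · exfalso
          rw [min_eq_right h] at hres
          linarith
        · exact h
      have h4 : -(f d0) < κ (G.rev d0) := by
        have := min_le_left (f d0) (κ d0)
        by_cases h5 : f d0 ≤ κ d0
        · rw [min_eq_left h5] at h3; linarith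
        · push_neg at h5
          rw [min_eq_right (le_of_lt h5)] at h3
          linarith
      rw [hcar, hf d0]
      linarith
    · rw [e3 d h1 h2] at hres
      rw [hca d h1 h2]
      exact hres

lemma truncAt_inflow (G : Dgraph V D) (κ f : D → ℝ) (d0 : D) (hne : G.rev d0 ≠ d0) {v : V}
    (h1 : G.head d0 ≠ v) (h2 : G.head (G.rev d0) ≠ v) :
    G.inflow (G.truncAt κ f d0) v = G.inflow f v := by
  obtain ⟨e1, e2, e3⟩ := G.truncAt_eval κ f d0 hne
  refine G.inflow_congr (fun d hd => ?_)
  refine e3 d (fun h => h1 (by rw [← h]; exact hd)) (fun h => h2 (by rw [← h]; exact hd))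

end Dgraph
namespace Dgraph

open Finset
set_option linter.unusedSectionVars false
set_option linter.unusedVariables false

section Main

variable {V D : Type} [Fintype D] [DecidableEq V] [DecidableEq D]
variable {G : Dgraph V D} {c0 : D → ℝ} {M : ℝ} {k : ℕ} {p : Fin (k+1) → V} {dP : Fin k → D}

lemma dP_inj (hp : Function.Injective p)
    (hdt : ∀ i, G.tail (dP i) = p i.castSucc) {i j : Fin k} (h : dP i = dP j) : i = j := by
  have := congrArg G.tail h
  rw [hdt, hdt] at this
  have := hp this
  have := congrArg Fin.val this
  simp only [Fin.coe_castSucc] at this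
  exact Fin.ext this

lemma dP_ne_rev (hp : Function.Injective p)
    (hdt : ∀ i, G.tail (dP i) = p i.castSucc) (hdh : ∀ i, G.head (dP i) = p i.succ)
    (i j : Fin k) : dP i ≠ G.rev (dP j) := by
  intro h
  have h1 := congrArg G.tail h
  rw [hdt, G.tail_rev, hdh] at h1
  have h2 := congrArg G.head h
  rw [hdh, G.head_rev, hdt] at h2
  have h1' := congrArg Fin.val (hp h1)
  have h2' := congrArg Fin.val (hp h2)
  simp only [Fin.coe_castSucc, Fin.val_succ] at h1' h2'
  omega

lemma rev_dP_ne_self (hp : Function.Injective p)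
    (hdt : ∀ i, G.tail (dP i) = p i.castSucc) (hdh : ∀ i, G.head (dP i) = p i.succ)
    (i : Fin k) : G.rev (dP i) ≠ dP i :=
  fun h => dP_ne_rev hp hdt hdh i i h.symm

lemma fixCaps_small {n : ℕ} {d : D}
    (h : ∀ j : Fin k, n ≤ (j:ℕ) → d ≠ dP j ∧ d ≠ G.rev (dP j)) :
    G.fixCaps c0 M dP n d = c0 d := by
  unfold fixCaps
  rw [if_neg, add_zero]
  rintro ⟨j, hj, h1 | h1⟩
  · exact (h j hj).1 h1
  · exact (h j hj).2 h1

lemma fixCaps_dP {n : ℕ} {j : Fin k} (h : n ≤ (j:ℕ)) :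
    G.fixCaps c0 M dP n (dP j) = c0 (dP j) + M := by
  unfold fixCaps
  rw [if_pos ⟨j, h, Or.inl rfl⟩]

lemma fixCaps_rev_dP {n : ℕ} {j : Fin k} (h : n ≤ (j:ℕ)) :
    G.fixCaps c0 M dP n (G.rev (dP j)) = c0 (G.rev (dP j)) + M := by
  unfold fixCaps
  rw [if_pos ⟨j, h, Or.inr rfl⟩]

lemma fixCaps_classify {n : ℕ} {d : D} (h : G.fixCaps c0 M dP n d ≠ c0 d) :
    ∃ j : Fin k, n ≤ (j:ℕ) ∧ (d = dP j ∨ d = G.rev (dP j)) := by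
  by_contra hc
  exact h (fixCaps_small (fun j hj => by push_neg at hc; exact hc j hj))

lemma fixCaps_ge (hM0 : 0 ≤ M) (n : ℕ) (d : D) : c0 d ≤ G.fixCaps c0 M dP n d := by
  unfold fixCaps
  split <;> linarith

lemma fixCaps_le (hM0 : 0 ≤ M) (n : ℕ) (d : D) : G.fixCaps c0 M dP n d ≤ c0 d + M := by
  unfold fixCaps
  split <;> linarith

lemma fixCaps_succ_eq {i : Fin k} {d : D} (h1 : d ≠ dP i) (h2 : d ≠ G.rev (dP i)) :
    G.fixCaps c0 M dP ((i:ℕ)+1) d = G.fixCaps c0 M dP (i:ℕ) d := by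
  unfold fixCaps
  congr 1
  refine if_congr ⟨?_, ?_⟩ rfl rfl
  · rintro ⟨j, hj, hd⟩
    exact ⟨j, by omega, hd⟩
  · rintro ⟨j, hj, hd⟩
    refine ⟨j, ?_, hd⟩
    rcases Nat.lt_or_ge (i:ℕ) ((j:ℕ)+1) with h | h
    · have : (i:ℕ) = (j:ℕ) ∨ (i:ℕ) + 1 ≤ (j:ℕ) := by omega
      rcases this with h' | h'
      · exfalso
        have hij : i = j := Fin.ext h'
        subst hij
        rcases hd with hd | hd
        · exact h1 hd
        · exact h2 hd
      · exact h'
    · omega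

lemma fixCaps_succ_dP (hp : Function.Injective p)
    (hdt : ∀ i, G.tail (dP i) = p i.castSucc) (hdh : ∀ i, G.head (dP i) = p i.succ)
    (i : Fin k) : G.fixCaps c0 M dP ((i:ℕ)+1) (dP i) = c0 (dP i) := by
  refine fixCaps_small (fun j hj => ⟨fun h => ?_, dP_ne_rev hp hdt hdh i j⟩)
  have := dP_inj hp hdt h
  subst this
  omega

lemma fixCaps_succ_rev_dP (hp : Function.Injective p)
    (hdt : ∀ i, G.tail (dP i) = p i.castSucc) (hdh : ∀ i, G.head (dP i) = p i.succ)
    (i : Fin k) : G.fixCaps c0 M dP ((i:ℕ)+1) (G.rev (dP i)) = c0 (G.rev (dP i)) := by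
  refine fixCaps_small (fun j hj => ⟨fun h => dP_ne_rev hp hdt hdh j i h.symm, fun h => ?_⟩)
  have h2 : dP i = dP j := by
    have := congrArg G.rev h
    rwa [G.rev_rev, G.rev_rev] at this
  have := dP_inj hp hdt h2
  subst this
  omega

end Main

end Dgraph
namespace Dgraph

open Finset
set_option linter.unusedSectionVars false
set_option linter.unusedVariables false

section Main

variable {V D : Type} [Fintype D] [DecidableEq V] [DecidableEq D]
variable {G : Dgraph V D} {c0 : D → ℝ} {M : ℝ} {k : ℕ} {p : Fin (k+1) → V} {dP : Fin k → D}

lemma sum_filter_instSwap {α : Type} [Fintype α] (p : α → Prop)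
    (i1 i2 : DecidablePred p) (g : α → ℝ) :
    (∑ d ∈ @Finset.filter α p i1 Finset.univ, g d)
      = ∑ d ∈ @Finset.filter α p i2 Finset.univ, g d := by
  cases (funext fun a => Subsingleton.elim (i1 a) (i2 a) : i1 = i2)
  rfl

open Classical in
lemma sum_cut_rev (G : Dgraph V D) {h : D → ℝ} (hanti : G.Antisym h) (X : Set V) :
    ∑ d ∈ Finset.univ.filter (fun d => G.tail d ∈ X ∧ G.head d ∉ X), h d
      = - ∑ d ∈ Finset.univ.filter (fun d => G.head d ∈ X ∧ G.tail d ∉ X), h d := by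
  have himg : Finset.univ.filter (fun d => G.tail d ∈ X ∧ G.head d ∉ X)
      = (Finset.univ.filter (fun d => G.head d ∈ X ∧ G.tail d ∉ X)).image G.rev := by
    ext d
    simp only [Finset.mem_filter, Finset.mem_univ, true_and, Finset.mem_image]
    constructor
    · rintro ⟨h1, h2⟩
      exact ⟨G.rev d, ⟨by rwa [G.head_rev], by rwa [G.tail_rev]⟩, G.rev_rev d⟩
    · rintro ⟨e, ⟨h1, h2⟩, rfl⟩
      rw [G.head_rev, G.tail_rev]
      exact ⟨h1, h2⟩
  rw [himg, Finset.sum_image (fun x _ y _ hxy => by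
    have := congrArg G.rev hxy; rwa [G.rev_rev, G.rev_rev] at this)]
  rw [show (∑ e ∈ Finset.univ.filter (fun d => G.head d ∈ X ∧ G.tail d ∉ X), h (G.rev e))
      = ∑ e ∈ Finset.univ.filter (fun d => G.head d ∈ X ∧ G.tail d ∉ X), - h e from
    Finset.sum_congr rfl (fun d _ => hanti d)]
  exact Finset.sum_neg_distrib _

open Classical in
/-- key boundary-sum identity: the flow change `f - f0` across the boundary of the
set of path nodes with index `> m` sums to zero. -/
lemma cut_h_zero
    (hp : Function.Injective p) {f f0 : D → ℝ}
    (hanti : G.Antisym f) (hanti0 : G.Antisym f0)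
    {m : Fin k}
    (hinfl : ∀ l : Fin (k+1), (m:ℕ)+1 ≤ (l:ℕ) → G.inflow f (p l) = G.inflow f0 (p l)) :
    ∑ d ∈ Finset.univ.filter (fun d =>
        G.head d ∈ {v | ∃ l : Fin (k+1), (m:ℕ)+1 ≤ (l:ℕ) ∧ p l = v} ∧
        G.tail d ∉ {v | ∃ l : Fin (k+1), (m:ℕ)+1 ≤ (l:ℕ) ∧ p l = v}),
      (f d - f0 d) = 0 := by
  have hanti' : G.Antisym (fun d => f d - f0 d) := fun d => by
    simp only [hanti d, hanti0 d]; ring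
  have h1 := G.cut_sum hanti' {v | ∃ l : Fin (k+1), (m:ℕ)+1 ≤ (l:ℕ) ∧ p l = v}
  have h2 := G.sum_filter_head (fun d => f d - f0 d)
      (· ∈ {v : V | ∃ l : Fin (k+1), (m:ℕ)+1 ≤ (l:ℕ) ∧ p l = v})
  try simp only [Finset.filter_congr_decidable] at h1 h2 ⊢
  refine (sum_filter_instSwap _ _ _ _).trans (h1.trans (h2.trans ?_))
  refine Finset.sum_eq_zero (fun v hv => ?_)
  have hvX : v ∈ {v : V | ∃ l : Fin (k+1), (m:ℕ)+1 ≤ (l:ℕ) ∧ p l = v} := by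
    simp only [Finset.mem_filter] at hv
    exact hv.2
  obtain ⟨l, hl, rfl⟩ := hvX
  rw [G.inflow_sub, hinfl l hl, sub_self]

end Main

end Dgraph
namespace Dgraph

open Finset
set_option linter.unusedSectionVars false
set_option linter.unusedVariables false

section Main

variable {V D : Type} [Fintype D] [DecidableEq V] [DecidableEq D]
variable {G : Dgraph V D} {c0 : D → ℝ} {M : ℝ} {k : ℕ} {p : Fin (k+1) → V} {dP : Fin k → D}

open Classical in
/-- In-boundary version of the saturation dichotomy: if the reverse of the path dart
`dP m` is saturated, then all other darts entering the node set `X = {p_l : l > m}`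
are saturated as well. -/
lemma cut_saturated_in (hp : Function.Injective p)
    (hdt : ∀ i, G.tail (dP i) = p i.castSucc) (hdh : ∀ i, G.head (dP i) = p i.succ)
    (hc0 : ∀ d, 0 ≤ c0 d) (hM : M = ∑ d : D, c0 d)
    {s : ℕ} {f f0 : D → ℝ}
    (hanti : G.Antisym f) (hle : ∀ d, f d ≤ G.fixCaps c0 M dP s d)
    (hanti0 : G.Antisym f0) (hle0 : ∀ d, f0 d ≤ c0 d)
    {m : Fin k} (hsm : s ≤ (m:ℕ))
    (hinfl : ∀ l : Fin (k+1), (m:ℕ)+1 ≤ (l:ℕ) → G.inflow f (p l) = G.inflow f0 (p l))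
    (hsat : G.fixCaps c0 M dP s (G.rev (dP m)) ≤ f (G.rev (dP m))) :
    ∀ d, G.head d ∈ {v | ∃ l : Fin (k+1), (m:ℕ)+1 ≤ (l:ℕ) ∧ p l = v} →
      G.tail d ∉ {v | ∃ l : Fin (k+1), (m:ℕ)+1 ≤ (l:ℕ) ∧ p l = v} →
      d ≠ dP m → G.fixCaps c0 M dP s d - f d ≤ 0 := by
  intro d hdX htX hdm
  have hM0 : 0 ≤ M := hM ▸ Finset.sum_nonneg (fun e _ => hc0 e)
  have hXmem : ∀ l : Fin (k+1),
      p l ∈ {v | ∃ l' : Fin (k+1), (m:ℕ)+1 ≤ (l':ℕ) ∧ p l' = v} ↔ (m:ℕ)+1 ≤ (l:ℕ) := by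
    intro l
    simp only [Set.mem_setOf_eq]
    constructor
    · rintro ⟨l', h1, h2⟩
      have := hp h2
      subst this
      exact h1
    · intro h
      exact ⟨l, h, rfl⟩
  set In := Finset.univ.filter (fun e =>
      G.head e ∈ {v | ∃ l : Fin (k+1), (m:ℕ)+1 ≤ (l:ℕ) ∧ p l = v} ∧
      G.tail e ∉ {v | ∃ l : Fin (k+1), (m:ℕ)+1 ≤ (l:ℕ) ∧ p l = v}) with hIn
  have h0 : ∑ e ∈ In, (f e - f0 e) = 0 :=
    (sum_filter_instSwap _ _ _ _).trans (cut_h_zero hp hanti hanti0 hinfl)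
  have hdPIn : dP m ∈ In := by
    rw [hIn, Finset.mem_filter]
    refine ⟨Finset.mem_univ _, ?_, ?_⟩
    · rw [hdh m]
      exact (hXmem m.succ).mpr (by simp)
    · rw [hdt m]
      intro hc
      have := (hXmem m.castSucc).mp hc
      simp at this
  have hdIn : d ∈ In := by
    rw [hIn, Finset.mem_filter]
    exact ⟨Finset.mem_univ _, hdX, htX⟩
  have hdS : d ∈ In.erase (dP m) := Finset.mem_erase.mpr ⟨hdm, hdIn⟩
  have hsplit : ∑ e ∈ In.erase (dP m), (f e - f0 e) = -(f (dP m) - f0 (dP m)) := by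
    have h4 := Finset.add_sum_erase _ (fun e => f e - f0 e) hdPIn
    rw [h0] at h4
    have h5 : f (dP m) - f0 (dP m) + ∑ x ∈ In.erase (dP m), (f x - f0 x) = 0 := h4
    linarith
  have hfneg : f (dP m) ≤ -(c0 (G.rev (dP m)) + M) := by
    rw [fixCaps_rev_dP hsm] at hsat
    have h1 : f (G.rev (dP m)) = - f (dP m) := hanti (dP m)
    linarith
  have hf0rev : -c0 (G.rev (dP m)) ≤ f0 (dP m) := by
    have h1 : f0 (G.rev (dP m)) = - f0 (dP m) := hanti0 (dP m)
    have := hle0 (G.rev (dP m))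
    linarith
  have hlow : M ≤ ∑ e ∈ In.erase (dP m), (f e - f0 e) := by
    rw [hsplit]
    linarith
  have hsmall : ∀ e ∈ In.erase (dP m), G.fixCaps c0 M dP s e = c0 e := by
    intro e he
    obtain ⟨hedm, heIn⟩ := Finset.mem_erase.mp he
    rw [hIn, Finset.mem_filter] at heIn
    obtain ⟨-, heX, htX'⟩ := heIn
    by_contra hne
    obtain ⟨j, hj, hcase | hcase⟩ := fixCaps_classify hne
    · subst hcase
      rw [hdh j] at heX
      rw [hdt j] at htX'
      have h1 := (hXmem j.succ).mp heX
      have h2 : ¬ ((m:ℕ)+1 ≤ (j.castSucc : ℕ)) := fun hc => htX' ((hXmem j.castSucc).mpr hc)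
      simp only [Fin.val_succ, Fin.coe_castSucc] at h1 h2
      have : (j:ℕ) = (m:ℕ) := by omega
      exact hedm (congrArg dP (Fin.ext this))
    · subst hcase
      rw [G.head_rev, hdt j] at heX
      rw [G.tail_rev, hdh j] at htX'
      have h1 := (hXmem j.castSucc).mp heX
      have h2 : ¬ ((m:ℕ)+1 ≤ (j.succ : ℕ)) := fun hc => htX' ((hXmem j.succ).mpr hc)
      simp only [Fin.val_succ, Fin.coe_castSucc] at h1 h2
      omega
  have hbound : ∀ e ∈ In.erase (dP m), f e - f0 e ≤ c0 e + c0 (G.rev e) := by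
    intro e he
    have h1 := hle e
    rw [hsmall e he] at h1
    have h2 : f0 e = - f0 (G.rev e) := by
      have := hanti0 e; linarith
    have := hle0 (G.rev e)
    linarith
  have hupper : ∑ e ∈ In.erase (dP m), (c0 e + c0 (G.rev e)) ≤ M := by
    have hdisj : Disjoint (In.erase (dP m)) ((In.erase (dP m)).image G.rev) := by
      rw [Finset.disjoint_left]
      intro e heS heI
      obtain ⟨e', he', rfl⟩ := Finset.mem_image.mp heI
      have h1 : G.head (G.rev e') ∈ _ :=
        ((Finset.mem_filter.mp (Finset.mem_of_mem_erase heS)).2).1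
      rw [G.head_rev] at h1
      exact ((Finset.mem_filter.mp (Finset.mem_of_mem_erase he')).2).2 h1
    rw [Finset.sum_add_distrib]
    have h2 : ∑ e ∈ In.erase (dP m), c0 (G.rev e)
        = ∑ e ∈ (In.erase (dP m)).image G.rev, c0 e := by
      rw [Finset.sum_image (fun x _ y _ hxy => by
        have := congrArg G.rev hxy; rwa [G.rev_rev, G.rev_rev] at this)]
    rw [h2, ← Finset.sum_union hdisj, hM]
    exact Finset.sum_le_sum_of_subset_of_nonneg (Finset.subset_univ _)
      (fun e _ _ => hc0 e)
  have hsum_le : ∑ e ∈ In.erase (dP m), (f e - f0 e)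
      ≤ ∑ e ∈ In.erase (dP m), (c0 e + c0 (G.rev e)) := Finset.sum_le_sum hbound
  have heq : ∑ e ∈ In.erase (dP m), (f e - f0 e)
      = ∑ e ∈ In.erase (dP m), (c0 e + c0 (G.rev e)) := le_antisymm hsum_le (by linarith)
  have hterm := (Finset.sum_eq_sum_iff_of_le hbound).mp heq d hdS
  rw [hsmall d hdS]
  have h2 : f0 d = - f0 (G.rev d) := by have := hanti0 d; linarith
  have h3 := hle0 (G.rev d)
  linarith

end Main

end Dgraph
namespace Dgraph

open Finset
set_option linter.unusedSectionVars false
set_option linter.unusedVariables false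

section Main

variable {V D : Type} [Fintype D] [DecidableEq V] [DecidableEq D]
variable {G : Dgraph V D} {c0 : D → ℝ} {M : ℝ} {k : ℕ} {p : Fin (k+1) → V} {dP : Fin k → D}

open Classical in
/-- Out-boundary version of the saturation dichotomy. -/
lemma cut_saturated_out (hp : Function.Injective p)
    (hdt : ∀ i, G.tail (dP i) = p i.castSucc) (hdh : ∀ i, G.head (dP i) = p i.succ)
    (hc0 : ∀ d, 0 ≤ c0 d) (hM : M = ∑ d : D, c0 d)
    {s : ℕ} {f f0 : D → ℝ}
    (hanti : G.Antisym f) (hle : ∀ d, f d ≤ G.fixCaps c0 M dP s d)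
    (hanti0 : G.Antisym f0) (hle0 : ∀ d, f0 d ≤ c0 d)
    {m : Fin k} (hsm : s ≤ (m:ℕ))
    (hinfl : ∀ l : Fin (k+1), (m:ℕ)+1 ≤ (l:ℕ) → G.inflow f (p l) = G.inflow f0 (p l))
    (hsat : G.fixCaps c0 M dP s (dP m) ≤ f (dP m)) :
    ∀ d, G.tail d ∈ {v | ∃ l : Fin (k+1), (m:ℕ)+1 ≤ (l:ℕ) ∧ p l = v} →
      G.head d ∉ {v | ∃ l : Fin (k+1), (m:ℕ)+1 ≤ (l:ℕ) ∧ p l = v} →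
      d ≠ G.rev (dP m) → G.fixCaps c0 M dP s d - f d ≤ 0 := by
  intro d hdX htX hdm
  have hM0 : 0 ≤ M := hM ▸ Finset.sum_nonneg (fun e _ => hc0 e)
  have hXmem : ∀ l : Fin (k+1),
      p l ∈ {v | ∃ l' : Fin (k+1), (m:ℕ)+1 ≤ (l':ℕ) ∧ p l' = v} ↔ (m:ℕ)+1 ≤ (l:ℕ) := by
    intro l
    simp only [Set.mem_setOf_eq]
    constructor
    · rintro ⟨l', h1, h2⟩
      have := hp h2
      subst this
      exact h1
    · intro h
      exact ⟨l, h, rfl⟩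
  have hanti' : G.Antisym (fun e => f e - f0 e) := fun e => by
    simp only [hanti e, hanti0 e]; ring
  set Out := Finset.univ.filter (fun e =>
      G.tail e ∈ {v | ∃ l : Fin (k+1), (m:ℕ)+1 ≤ (l:ℕ) ∧ p l = v} ∧
      G.head e ∉ {v | ∃ l : Fin (k+1), (m:ℕ)+1 ≤ (l:ℕ) ∧ p l = v}) with hOut
  have h0 : ∑ e ∈ Out, (f e - f0 e) = 0 := by
    have hrev := G.sum_cut_rev hanti'
      {v | ∃ l : Fin (k+1), (m:ℕ)+1 ≤ (l:ℕ) ∧ p l = v}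
    have hz : ∑ e ∈ Finset.univ.filter (fun e =>
        G.head e ∈ {v | ∃ l : Fin (k+1), (m:ℕ)+1 ≤ (l:ℕ) ∧ p l = v} ∧
        G.tail e ∉ {v | ∃ l : Fin (k+1), (m:ℕ)+1 ≤ (l:ℕ) ∧ p l = v}), (f e - f0 e) =
        0 := (sum_filter_instSwap _ _ _ _).trans (cut_h_zero hp hanti hanti0 hinfl)
    refine (sum_filter_instSwap _ _ _ _).trans (hrev.trans ?_)
    rw [(sum_filter_instSwap _ _ _ _).trans hz]
    ring
  have hdPOut : G.rev (dP m) ∈ Out := by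
    rw [hOut, Finset.mem_filter]
    refine ⟨Finset.mem_univ _, ?_, ?_⟩
    · rw [G.tail_rev, hdh m]
      exact (hXmem m.succ).mpr (by simp)
    · rw [G.head_rev, hdt m]
      intro hc
      have := (hXmem m.castSucc).mp hc
      simp at this
  have hdOut : d ∈ Out := by
    rw [hOut, Finset.mem_filter]
    exact ⟨Finset.mem_univ _, hdX, htX⟩
  have hdS : d ∈ Out.erase (G.rev (dP m)) := Finset.mem_erase.mpr ⟨hdm, hdOut⟩
  have hsplit : ∑ e ∈ Out.erase (G.rev (dP m)), (f e - f0 e)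
      = -(f (G.rev (dP m)) - f0 (G.rev (dP m))) := by
    have h4 := Finset.add_sum_erase _ (fun e => f e - f0 e) hdPOut
    rw [h0] at h4
    have h5 : f (G.rev (dP m)) - f0 (G.rev (dP m))
        + ∑ x ∈ Out.erase (G.rev (dP m)), (f x - f0 x) = 0 := h4
    linarith
  have hfneg : f (G.rev (dP m)) ≤ -(c0 (dP m) + M) := by
    rw [fixCaps_dP hsm] at hsat
    have h1 : f (G.rev (dP m)) = - f (dP m) := hanti (dP m)
    linarith
  have hf0rev : -c0 (dP m) ≤ f0 (G.rev (dP m)) := by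
    have h1 : f0 (G.rev (dP m)) = - f0 (dP m) := hanti0 (dP m)
    have := hle0 (dP m)
    linarith
  have hlow : M ≤ ∑ e ∈ Out.erase (G.rev (dP m)), (f e - f0 e) := by
    rw [hsplit]
    linarith
  have hsmall : ∀ e ∈ Out.erase (G.rev (dP m)), G.fixCaps c0 M dP s e = c0 e := by
    intro e he
    obtain ⟨hedm, heOut⟩ := Finset.mem_erase.mp he
    rw [hOut, Finset.mem_filter] at heOut
    obtain ⟨-, heX, htX'⟩ := heOut
    by_contra hne
    obtain ⟨j, hj, hcase | hcase⟩ := fixCaps_classify hne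
    · subst hcase
      rw [hdt j] at heX
      rw [hdh j] at htX'
      have h1 := (hXmem j.castSucc).mp heX
      have h2 : ¬ ((m:ℕ)+1 ≤ (j.succ : ℕ)) := fun hc => htX' ((hXmem j.succ).mpr hc)
      simp only [Fin.val_succ, Fin.coe_castSucc] at h1 h2
      omega
    · subst hcase
      rw [G.tail_rev, hdh j] at heX
      rw [G.head_rev, hdt j] at htX'
      have h1 := (hXmem j.succ).mp heX
      have h2 : ¬ ((m:ℕ)+1 ≤ (j.castSucc : ℕ)) := fun hc => htX' ((hXmem j.castSucc).mpr hc)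
      simp only [Fin.val_succ, Fin.coe_castSucc] at h1 h2
      have : (j:ℕ) = (m:ℕ) := by omega
      exact hedm (congrArg (fun z => G.rev (dP z)) (Fin.ext this))
  have hbound : ∀ e ∈ Out.erase (G.rev (dP m)), f e - f0 e ≤ c0 e + c0 (G.rev e) := by
    intro e he
    have h1 := hle e
    rw [hsmall e he] at h1
    have h2 : f0 e = - f0 (G.rev e) := by
      have := hanti0 e; linarith
    have := hle0 (G.rev e)
    linarith
  have hupper : ∑ e ∈ Out.erase (G.rev (dP m)), (c0 e + c0 (G.rev e)) ≤ M := by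
    have hdisj : Disjoint (Out.erase (G.rev (dP m)))
        ((Out.erase (G.rev (dP m))).image G.rev) := by
      rw [Finset.disjoint_left]
      intro e heS heI
      obtain ⟨e', he', rfl⟩ := Finset.mem_image.mp heI
      have h1 : G.tail (G.rev e') ∈ _ :=
        ((Finset.mem_filter.mp (Finset.mem_of_mem_erase heS)).2).1
      rw [G.tail_rev] at h1
      exact ((Finset.mem_filter.mp (Finset.mem_of_mem_erase he')).2).2 h1
    rw [Finset.sum_add_distrib]
    have h2 : ∑ e ∈ Out.erase (G.rev (dP m)), c0 (G.rev e)
        = ∑ e ∈ (Out.erase (G.rev (dP m))).image G.rev, c0 e := by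
      rw [Finset.sum_image (fun x _ y _ hxy => by
        have := congrArg G.rev hxy; rwa [G.rev_rev, G.rev_rev] at this)]
    rw [h2, ← Finset.sum_union hdisj, hM]
    exact Finset.sum_le_sum_of_subset_of_nonneg (Finset.subset_univ _)
      (fun e _ _ => hc0 e)
  have hsum_le : ∑ e ∈ Out.erase (G.rev (dP m)), (f e - f0 e)
      ≤ ∑ e ∈ Out.erase (G.rev (dP m)), (c0 e + c0 (G.rev e)) := Finset.sum_le_sum hbound
  have heq : ∑ e ∈ Out.erase (G.rev (dP m)), (f e - f0 e)
      = ∑ e ∈ Out.erase (G.rev (dP m)), (c0 e + c0 (G.rev e)) :=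
    le_antisymm hsum_le (by linarith)
  have hterm := (Finset.sum_eq_sum_iff_of_le hbound).mp heq d hdS
  rw [hsmall d hdS]
  have h2 : f0 d = - f0 (G.rev d) := by have := hanti0 d; linarith
  have h3 := hle0 (G.rev d)
  linarith

end Main

end Dgraph
namespace Dgraph

open Finset
set_option linter.unusedSectionVars false
set_option linter.unusedVariables false

section Main

variable {V D : Type} [Fintype D] [DecidableEq V] [DecidableEq D]
variable {G : Dgraph V D} {c0 : D → ℝ} {M : ℝ} {k : ℕ} {p : Fin (k+1) → V} {dP : Fin k → D}

lemma nat_boundary {P : ℕ → Prop} {n : ℕ} (h1 : ¬ P (n+1)) :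
    ∀ l, n+1 ≤ l → P l → ∃ m, n+1 ≤ m ∧ m < l ∧ ¬ P m ∧ P (m+1) := by
  intro l
  induction l with
  | zero => intro h; omega
  | succ l ih =>
    intro h2 h3
    by_cases hl : n+1 ≤ l
    · by_cases hPl : P l
      · obtain ⟨m, hm1, hm2, hm3, hm4⟩ := ih hl hPl
        exact ⟨m, hm1, by omega, hm3, hm4⟩
      · exact ⟨l, hl, by omega, hPl, h3⟩
    · have : l = n := by omega
      subst this
      exact absurd h3 h1

open Classical in
/-- if the node `p (i+1)` is not residually reachable from `p i`, then no
later path node is residually reachable from `p i` either. -/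
lemma forward_block (hp : Function.Injective p)
    (hdt : ∀ i, G.tail (dP i) = p i.castSucc) (hdh : ∀ i, G.head (dP i) = p i.succ)
    (hc0 : ∀ d, 0 ≤ c0 d) (hM : M = ∑ d : D, c0 d)
    {f' f0 : D → ℝ} {i : Fin k}
    (anti' : G.Antisym f') (le' : ∀ d, f' d ≤ G.fixCaps c0 M dP ((i:ℕ)+1) d)
    (hanti0 : G.Antisym f0) (hle0 : ∀ d, f0 d ≤ c0 d)
    (hinfl : ∀ l : Fin (k+1), (i:ℕ)+2 ≤ (l:ℕ) → G.inflow f' (p l) = G.inflow f0 (p l))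
    (hb : ¬ G.ResReach (fun d => G.fixCaps c0 M dP ((i:ℕ)+1) d - f' d) (p i.castSucc) (p i.succ)) :
    ∀ j' : Fin (k+1), (i:ℕ) < (j':ℕ) →
      ¬ G.ResReach (fun d => G.fixCaps c0 M dP ((i:ℕ)+1) d - f' d) (p i.castSucc) (p j') := by
  intro j' hj' hreach
  set res' : D → ℝ := fun d => G.fixCaps c0 M dP ((i:ℕ)+1) d - f' d with hres'
  set R : Set V := {y | G.ResReach res' (p i.castSucc) y} with hR
  by_cases hj1 : (j' : ℕ) = (i:ℕ)+1
  · exact hb (by rwa [show i.succ = j' from Fin.ext (by simp [hj1])])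
  · have hj2 : (i:ℕ)+2 ≤ (j':ℕ) := by omega
    set P : ℕ → Prop := fun l => ∃ lf : Fin (k+1), (lf:ℕ) = l ∧ p lf ∈ R with hP
    have hP1 : ¬ P ((i:ℕ)+1) := by
      rintro ⟨lf, hval, hmem⟩
      exact hb (by rwa [show lf = i.succ from Fin.ext (by simp [hval])] at hmem)
    have hPj : P (j' : ℕ) := ⟨j', rfl, hreach⟩
    obtain ⟨m, hm1, hm2, hm3, hm4⟩ := nat_boundary hP1 (j' : ℕ) (by omega) hPj
    have hmk : m < k := by omega
    set mF : Fin k := ⟨m, hmk⟩ with hmF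
    have hmcs : p mF.castSucc ∉ R := fun h => hm3 ⟨mF.castSucc, by simp [hmF], h⟩
    have hms : p mF.succ ∈ R := by
      obtain ⟨lf, hv, hm⟩ := hm4
      rwa [show lf = mF.succ from Fin.ext (by simp [hv, hmF])] at hm
    by_cases hres : 0 < res' (G.rev (dP mF))
    · exact hmcs (Relation.ReflTransGen.tail hms
        ⟨G.rev (dP mF), by rw [G.tail_rev, hdh], by rw [G.head_rev, hdt], hres⟩)
    · have hsat : G.fixCaps c0 M dP ((i:ℕ)+1) (G.rev (dP mF)) ≤ f' (G.rev (dP mF)) := by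
        have : res' (G.rev (dP mF)) ≤ 0 := le_of_not_gt hres
        simp only [hres'] at this
        linarith
      have hcut := cut_saturated_in hp hdt hdh hc0 hM anti' le' hanti0 hle0
        (show (i:ℕ)+1 ≤ (mF:ℕ) from hm1)
        (fun l hl => hinfl l (by simp only [hmF] at hl; omega)) hsat
      have haX : p i.castSucc ∉ {v | ∃ l : Fin (k+1), (mF:ℕ)+1 ≤ (l:ℕ) ∧ p l = v} := by
        rintro ⟨l, h1, h2⟩
        have := hp h2
        subst this
        simp only [Fin.coe_castSucc, hmF] at h1
        omega
      have hjX : p j' ∈ {v | ∃ l : Fin (k+1), (mF:ℕ)+1 ≤ (l:ℕ) ∧ p l = v} :=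
        ⟨j', by simp only [hmF]; omega, rfl⟩
      obtain ⟨dc, hdc, htc, hhc, hrt⟩ := G.exists_cross_into res' hreach _ haX hjX
      by_cases hdcm : dc = dP mF
      · apply hmcs
        rw [← hdt mF, ← hdcm]
        exact hrt
      · have := hcut dc hhc htc hdcm
        simp only [hres'] at hdc
        linarith

open Classical in
/-- mirrored version: if `p i` is not residually reachable from `p (i+1)`, then
`p i` is not residually reachable from any later path node. -/
lemma backward_block (hp : Function.Injective p)
    (hdt : ∀ i, G.tail (dP i) = p i.castSucc) (hdh : ∀ i, G.head (dP i) = p i.succ)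
    (hc0 : ∀ d, 0 ≤ c0 d) (hM : M = ∑ d : D, c0 d)
    {f' f0 : D → ℝ} {i : Fin k}
    (anti' : G.Antisym f') (le' : ∀ d, f' d ≤ G.fixCaps c0 M dP ((i:ℕ)+1) d)
    (hanti0 : G.Antisym f0) (hle0 : ∀ d, f0 d ≤ c0 d)
    (hinfl : ∀ l : Fin (k+1), (i:ℕ)+2 ≤ (l:ℕ) → G.inflow f' (p l) = G.inflow f0 (p l))
    (hb : ¬ G.ResReach (fun d => G.fixCaps c0 M dP ((i:ℕ)+1) d - f' d) (p i.succ) (p i.castSucc)) :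
    ∀ j' : Fin (k+1), (i:ℕ) < (j':ℕ) →
      ¬ G.ResReach (fun d => G.fixCaps c0 M dP ((i:ℕ)+1) d - f' d) (p j') (p i.castSucc) := by
  intro j' hj' hreach
  set res' : D → ℝ := fun d => G.fixCaps c0 M dP ((i:ℕ)+1) d - f' d with hres'
  set R : Set V := {y | G.ResReach res' y (p i.castSucc)} with hR
  by_cases hj1 : (j' : ℕ) = (i:ℕ)+1
  · exact hb (by rwa [show j' = i.succ from Fin.ext (by simp [hj1])] at hreach)
  · have hj2 : (i:ℕ)+2 ≤ (j':ℕ) := by omega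
    set P : ℕ → Prop := fun l => ∃ lf : Fin (k+1), (lf:ℕ) = l ∧ p lf ∈ R with hP
    have hP1 : ¬ P ((i:ℕ)+1) := by
      rintro ⟨lf, hval, hmem⟩
      exact hb (by rwa [show lf = i.succ from Fin.ext (by simp [hval])] at hmem)
    have hPj : P (j' : ℕ) := ⟨j', rfl, hreach⟩
    obtain ⟨m, hm1, hm2, hm3, hm4⟩ := nat_boundary hP1 (j' : ℕ) (by omega) hPj
    have hmk : m < k := by omega
    set mF : Fin k := ⟨m, hmk⟩ with hmF
    have hmcs : p mF.castSucc ∉ R := fun h => hm3 ⟨mF.castSucc, by simp [hmF], h⟩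
    have hms : p mF.succ ∈ R := by
      obtain ⟨lf, hv, hm⟩ := hm4
      rwa [show lf = mF.succ from Fin.ext (by simp [hv, hmF])] at hm
    by_cases hres : 0 < res' (dP mF)
    · exact hmcs (Relation.ReflTransGen.head ⟨dP mF, hdt mF, hdh mF, hres⟩ hms)
    · have hsat : G.fixCaps c0 M dP ((i:ℕ)+1) (dP mF) ≤ f' (dP mF) := by
        have : res' (dP mF) ≤ 0 := le_of_not_gt hres
        simp only [hres'] at this
        linarith
      have hcut := cut_saturated_out hp hdt hdh hc0 hM anti' le' hanti0 hle0
        (show (i:ℕ)+1 ≤ (mF:ℕ) from hm1)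
        (fun l hl => hinfl l (by simp only [hmF] at hl; omega)) hsat
      have haX : p i.castSucc ∉ {v | ∃ l : Fin (k+1), (mF:ℕ)+1 ≤ (l:ℕ) ∧ p l = v} := by
        rintro ⟨l, h1, h2⟩
        have := hp h2
        subst this
        simp only [Fin.coe_castSucc, hmF] at h1
        omega
      have hjX : p j' ∈ {v | ∃ l : Fin (k+1), (mF:ℕ)+1 ≤ (l:ℕ) ∧ p l = v} :=
        ⟨j', by simp only [hmF]; omega, rfl⟩
      obtain ⟨dc, hdc, htc, hhc, hrt⟩ := G.exists_cross_out res' hreach _ haX hjX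
      by_cases hdcm : dc = G.rev (dP mF)
      · apply hmcs
        rw [← show G.head dc = p mF.castSucc from by rw [hdcm, G.head_rev, hdt]]
        exact hrt
      · have := hcut dc htc hhc hdcm
        simp only [hres'] at hdc
        linarith

end Main

end Dgraph
namespace Dgraph

open Finset
set_option linter.unusedSectionVars false
set_option linter.unusedVariables false
set_option maxHeartbeats 1000000

section Main

variable {V D : Type} [Fintype D] [DecidableEq V] [DecidableEq D]
variable {G : Dgraph V D} {c0 : D → ℝ} {M : ℝ} {k : ℕ} {p : Fin (k+1) → V} {dP : Fin k → D}

lemma inflow_zero (G : Dgraph V D) (v : V) : G.inflow (fun _ => (0:ℝ)) v = 0 := by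
  simp [inflow]

open Classical in
lemma main_inv (hp : Function.Injective p)
    (hdt : ∀ i, G.tail (dP i) = p i.castSucc) (hdh : ∀ i, G.head (dP i) = p i.succ)
    (hc0 : ∀ d, 0 ≤ c0 d) (hM : M = ∑ d : D, c0 d)
    {f0 : D → ℝ} (hanti0 : G.Antisym f0) (hle0 : ∀ d, f0 d ≤ c0 d)
    {f : ℕ → D → ℝ} (hinit : f 0 = f0)
    (hstep : ∀ i : Fin k, G.FixStep c0 M p dP i (f (i:ℕ)) (f ((i:ℕ)+1))) :
    ∀ n, n ≤ k →
      (G.Antisym (f n) ∧ ∀ d, f n d ≤ G.fixCaps c0 M dP n d) ∧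
      (∀ v, (∀ l : Fin (k+1), (l:ℕ) ≤ n → p l ≠ v) → G.inflow (f n) v = G.inflow f0 v) ∧
      (∀ j j' : Fin (k+1), (j:ℕ) < n → j < j' →
        (0 < G.inflow (f n) (p j) →
          ¬ G.ResReach (fun d => G.fixCaps c0 M dP n d - f n d) (p j) (p j')) ∧
        (G.inflow (f n) (p j) < 0 →
          ¬ G.ResReach (fun d => G.fixCaps c0 M dP n d - f n d) (p j') (p j))) := by
  have hM0 : 0 ≤ M := hM ▸ Finset.sum_nonneg (fun e _ => hc0 e)
  intro n
  induction n with
  | zero =>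
    intro _
    refine ⟨⟨hinit ▸ hanti0, fun d => ?_⟩, fun v _ => by rw [hinit],
      fun j j' hj _ => by omega⟩
    rw [hinit]
    exact le_trans (hle0 d) (fixCaps_ge hM0 0 d)
  | succ n ih =>
    intro hn1
    have hnk : n < k := hn1
    obtain ⟨⟨anti_n, le_n⟩, Hn, Invn⟩ := ih (le_of_lt hnk)
    obtain ⟨t, g, ht, hcase, hf'⟩ := hstep ⟨n, hnk⟩
    set i : Fin k := ⟨n, hnk⟩ with hi
    have hiv : (i:ℕ) = n := rfl
    have hivc : (i.castSucc : ℕ) = n := rfl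
    have hivs : (i.succ : ℕ) = n + 1 := rfl
    have hne : G.rev (dP i) ≠ dP i := rev_dP_ne_self hp hdt hdh i
    have hκd0 : G.fixCaps c0 M dP (n+1) (dP i) = c0 (dP i) :=
      fixCaps_succ_dP hp hdt hdh i
    have hκr0 : G.fixCaps c0 M dP (n+1) (G.rev (dP i)) = c0 (G.rev (dP i)) :=
      fixCaps_succ_rev_dP hp hdt hdh i
    have hκeq : ∀ d, d ≠ dP i → d ≠ G.rev (dP i) →
        G.fixCaps c0 M dP (n+1) d = G.fixCaps c0 M dP n d :=
      fun d h1 h2 => fixCaps_succ_eq h1 h2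
    have hcad0 : G.fixCaps c0 M dP n (dP i) = c0 (dP i) + M :=
      fixCaps_dP (le_of_eq hiv.symm)
    have hcar0 : G.fixCaps c0 M dP n (G.rev (dP i)) = c0 (G.rev (dP i)) + M :=
      fixCaps_rev_dP (le_of_eq hiv.symm)
    have tanti : G.Antisym t := ht ▸ G.truncAt_antisym _ anti_n _ hne
    have tle : ∀ d, t d ≤ G.fixCaps c0 M dP (n+1) d := by
      rw [ht]
      refine G.truncAt_le _ hne ?_ ?_
      · rw [hκd0, hκr0]
        have := hc0 (dP i); have := hc0 (G.rev (dP i)); linarith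
      · intro d h1 h2
        rw [hκeq d h1 h2]
        exact le_n d
    have tres : ∀ d, 0 < G.fixCaps c0 M dP (n+1) d - t d →
        0 < G.fixCaps c0 M dP n d - f n d := by
      rw [ht]
      refine G.truncAt_res hM0 _ hne anti_n (fun d h1 h2 => (hκeq d h1 h2).symm) ?_ ?_
      · rw [hκd0, hcad0]
      · rw [hκr0, hcar0]
    have treach : ∀ u v, G.ResReach (fun d => G.fixCaps c0 M dP (n+1) d - t d) u v →
        G.ResReach (fun d => G.fixCaps c0 M dP n d - f n d) u v :=
      fun u v h => G.reach_mono (fun d => tres d) h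
    have tinfl : ∀ v, v ≠ p i.castSucc → v ≠ p i.succ →
        G.inflow t v = G.inflow (f n) v := by
      intro v h1 h2
      rw [ht]
      exact G.truncAt_inflow _ _ _ hne (by rw [hdh]; exact Ne.symm h2)
        (by rw [G.head_rev, hdt]; exact Ne.symm h1)
    have hab : p i.castSucc ≠ p i.succ := fun h => by
      have := congrArg Fin.val (hp h)
      simp at this
    have hΔ : f (n+1) = fun d => t d + g d := hf'
    have hres_eq : (fun d => G.fixCaps c0 M dP (n+1) d - f (n+1) d)
        = fun d => ((fun e => G.fixCaps c0 M dP (n+1) e - t e) d - g d) := by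
      funext d
      simp only [hΔ]
      ring
    -- facts depending on the push direction
    obtain ⟨A, B, x, hmax, hAB, hxpos, hABor⟩ :
        ∃ (A B : V) (x : ℝ),
          G.MaxLimFlow (fun d => G.fixCaps c0 M dP (n+1) d - t d) A B x g ∧
          A ≠ B ∧ 0 ≤ x ∧
          ((A = p i.castSucc ∧ B = p i.succ ∧ x = G.inflow t (p i.castSucc) ∧
              0 < G.inflow t (p i.castSucc)) ∨
           (A = p i.succ ∧ B = p i.castSucc ∧ x = -(G.inflow t (p i.castSucc)) ∧
              G.inflow t (p i.castSucc) ≤ 0)) := by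
      rcases hcase with ⟨h1, h2⟩ | ⟨h1, h2⟩
      · exact ⟨_, _, _, h2, hab, le_of_lt h1, Or.inl ⟨rfl, rfl, rfl, h1⟩⟩
      · exact ⟨_, _, _, h2, Ne.symm hab, by linarith, Or.inr ⟨rfl, rfl, rfl, h1⟩⟩
    obtain ⟨ganti, gle, gcons, gx, gmax⟩ := hmax
    have gzero : 0 ≤ G.inflow g B := by
      have h0 := gmax (fun _ => 0) (fun d => by norm_num)
        (fun d => by have := tle d; simp only [sub_nonneg]; linarith)
        (fun v _ _ => G.inflow_zero v) (by rw [G.inflow_zero]; exact hxpos)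
      rwa [G.inflow_zero] at h0
    have gpair : G.inflow g A + G.inflow g B = 0 := G.inflow_pair ganti hAB gcons
    have anti' : G.Antisym (f (n+1)) := by
      intro d
      rw [hΔ]
      show t (G.rev d) + g (G.rev d) = -(t d + g d)
      rw [tanti d, ganti d]; ring
    have le' : ∀ d, f (n+1) d ≤ G.fixCaps c0 M dP (n+1) d := by
      intro d
      rw [hΔ]
      show t d + g d ≤ _
      have h5 : g d ≤ G.fixCaps c0 M dP (n+1) d - t d := gle d
      linarith
    have habmem : ∀ v : V, (∀ l : Fin (k+1), (l:ℕ) ≤ n+1 → p l ≠ v) →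
        v ≠ A ∧ v ≠ B := by
      intro v hv
      have h1 : p i.castSucc ≠ v := hv i.castSucc (by rw [hivc]; omega)
      have h2 : p i.succ ≠ v := hv i.succ (by rw [hivs])
      rcases hABor with ⟨hA, hB, -, -⟩ | ⟨hA, hB, -, -⟩ <;>
        exact ⟨by rw [hA]; first | exact Ne.symm h1 | exact Ne.symm h2,
               by rw [hB]; first | exact Ne.symm h1 | exact Ne.symm h2⟩
    have Hn1 : ∀ v, (∀ l : Fin (k+1), (l:ℕ) ≤ n+1 → p l ≠ v) →
        G.inflow (f (n+1)) v = G.inflow f0 v := by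
      intro v hv
      obtain ⟨hvA, hvB⟩ := habmem v hv
      rw [hΔ, G.inflow_add, gcons v hvA hvB, add_zero,
        tinfl v (Ne.symm (hv i.castSucc (by rw [hivc]; omega)))
          (Ne.symm (hv i.succ (by rw [hivs])))]
      exact Hn v (fun l hl => hv l (by omega))
    refine ⟨⟨anti', le'⟩, Hn1, ?_⟩
    intro j j' hj hjj'
    have hjj'v : (j:ℕ) < (j':ℕ) := hjj'
    by_cases hjn : (j:ℕ) < n
    · -- old claims, preserved
      have hpja : p j ≠ p i.castSucc := fun h => by
        have := congrArg Fin.val (hp h); rw [hivc] at this; omega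
      have hpjb : p j ≠ p i.succ := fun h => by
        have := congrArg Fin.val (hp h); rw [hivs] at this; omega
      have hpjA : p j ≠ A ∧ p j ≠ B := by
        rcases hABor with ⟨hA, hB, -, -⟩ | ⟨hA, hB, -, -⟩ <;> rw [hA, hB] <;>
          first
          | exact ⟨hpja, hpjb⟩
          | exact ⟨hpjb, hpja⟩
      have hinfl_j : G.inflow (f (n+1)) (p j) = G.inflow (f n) (p j) := by
        rw [hΔ, G.inflow_add, gcons (p j) hpjA.1 hpjA.2, add_zero, tinfl _ hpja hpjb]
      have hBind : ∃ lB : Fin (k+1), p lB = B ∧ (j:ℕ) < (lB:ℕ) := by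
        rcases hABor with ⟨-, hB, -, -⟩ | ⟨-, hB, -, -⟩
        · exact ⟨i.succ, hB.symm, by rw [hivs]; omega⟩
        · exact ⟨i.castSucc, hB.symm, by rw [hivc]; omega⟩
      have hAind : ∃ lA : Fin (k+1), p lA = A ∧ (j:ℕ) < (lA:ℕ) := by
        rcases hABor with ⟨hA, -, -, -⟩ | ⟨hA, -, -, -⟩
        · exact ⟨i.castSucc, hA.symm, by rw [hivc]; omega⟩
        · exact ⟨i.succ, hA.symm, by rw [hivs]; omega⟩
      constructor
      · intro hpos hre
        rw [hinfl_j] at hpos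
        obtain ⟨lB, hlB, hjlB⟩ := hBind
        have hnb : ¬ G.ResReach (fun d => G.fixCaps c0 M dP (n+1) d - t d) (p j) B := by
          rw [← hlB]
          intro hr
          exact (Invn j lB hjn hjlB).1 hpos (treach _ _ hr)
        rw [hres_eq] at hre
        have hkey := G.push_preserve_forward ganti gle gcons hAB gzero hnb (p j') hre
        exact (Invn j j' hjn hjj').1 hpos (treach _ _ hkey)
      · intro hneg hre
        rw [hinfl_j] at hneg
        obtain ⟨lA, hlA, hjlA⟩ := hAind
        have hna : ¬ G.ResReach (fun d => G.fixCaps c0 M dP (n+1) d - t d) A (p j) := by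
          rw [← hlA]
          intro hr
          exact (Invn j lA hjn hjlA).2 hneg (treach _ _ hr)
        rw [hres_eq] at hre
        have hkey := G.push_preserve_backward ganti gle gcons hAB gzero hna (p j') hre
        exact (Invn j j' hjn hjj').2 hneg (treach _ _ hkey)
    · -- new claims at j = i
      have hjn' : (j:ℕ) = n := by omega
      have hjeq : j = i.castSucc := Fin.ext (by rw [hivc, hjn'])
      have hinfl2 : ∀ l : Fin (k+1), (i:ℕ)+2 ≤ (l:ℕ) →
          G.inflow (f (n+1)) (p l) = G.inflow f0 (p l) := by
        intro l hl
        rw [hiv] at hl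
        refine Hn1 (p l) (fun l' hl' he => ?_)
        have := congrArg Fin.val (hp he)
        omega
      rcases hABor with ⟨hA, hB, hx, hpt⟩ | ⟨hA, hB, hx, hpt⟩
      · -- push from p i to p (i+1)
        have hga : G.inflow g A = -(G.inflow g B) := by linarith
        have hinfa : G.inflow (f (n+1)) (p i.castSucc) = x - G.inflow g B := by
          rw [hΔ, G.inflow_add, hx, ← hA]
          linarith
        constructor
        · intro hpos hre
          rw [hjeq, hinfa] at hpos
          have hvlt : G.inflow g B < x := by linarith
          have hbmax := G.max_no_augpath hAB ⟨ganti, gle, gcons, gx, gmax⟩ hvlt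
          have hb' : ¬ G.ResReach (fun d => G.fixCaps c0 M dP ((i:ℕ)+1) d - f (n+1) d)
              (p i.castSucc) (p i.succ) := by
            rw [hiv, hres_eq]
            rw [hA, hB] at hbmax
            exact hbmax
          have := forward_block hp hdt hdh hc0 hM anti'
            (by rw [hiv]; exact le') hanti0 hle0 (by rw [hiv]; exact hinfl2) hb' j'
            (by rw [hiv]; omega)
          rw [hiv] at this
          exact this (by rwa [hjeq] at hre)
        · intro hneg
          rw [hjeq, hinfa] at hneg
          linarith
      · -- push from p (i+1) to p i
        have hinfa : G.inflow (f (n+1)) (p i.castSucc)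
            = G.inflow t (p i.castSucc) + G.inflow g B := by
          rw [hΔ, G.inflow_add, ← hB]
        constructor
        · intro hpos
          rw [hjeq, hinfa] at hpos
          linarith
        · intro hneg hre
          rw [hjeq, hinfa] at hneg
          have hvlt : G.inflow g B < x := by rw [hx]; linarith
          have hbmax := G.max_no_augpath hAB ⟨ganti, gle, gcons, gx, gmax⟩ hvlt
          have hb' : ¬ G.ResReach (fun d => G.fixCaps c0 M dP ((i:ℕ)+1) d - f (n+1) d)
              (p i.succ) (p i.castSucc) := by
            rw [hiv, hres_eq]
            rw [hA, hB] at hbmax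
            exact hbmax
          have := backward_block hp hdt hdh hc0 hM anti'
            (by rw [hiv]; exact le') hanti0 hle0 (by rw [hiv]; exact hinfl2) hb' j'
            (by rw [hiv]; omega)
          rw [hiv] at this
          exact this (by rwa [hjeq] at hre)

end Main

end Dgraph
/-- invariant of the abstract path-fixing algorithm after `i` iterations. -/
theorem stmt13 {V D : Type} [Fintype D] [DecidableEq V] [DecidableEq D]
    (G : Dgraph V D) (c0 : D → ℝ) (hc0 : ∀ d, 0 ≤ c0 d)
    (k : ℕ) (p : Fin (k+1) → V) (hp : Function.Injective p)
    (dP : Fin k → D)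
    (hdt : ∀ i, G.tail (dP i) = p i.castSucc) (hdh : ∀ i, G.head (dP i) = p i.succ)
    (f0 : D → ℝ) (hf0 : G.Pseudoflow c0 f0)
    (M : ℝ) (hM : M = ∑ d : D, c0 d)
    (f : ℕ → D → ℝ) (hinit : f 0 = f0)
    (hstep : ∀ i : Fin k, G.FixStep c0 M p dP i (f (i : ℕ)) (f ((i : ℕ) + 1)))
    (i : ℕ) (hi : i ≤ k) :
    (∀ j j' : Fin (k+1), (j : ℕ) < i → j < j' →
      (0 < G.inflow (f i) (p j) →
        ¬ G.ResReach (fun d => G.fixCaps c0 M dP i d - f i d) (p j) (p j')) ∧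
      (G.inflow (f i) (p j) < 0 →
        ¬ G.ResReach (fun d => G.fixCaps c0 M dP i d - f i d) (p j') (p j))) ∧
    (∀ j j' : Fin (k+1), (j : ℕ) < i → (j' : ℕ) < i →
      0 < G.inflow (f i) (p j) → G.inflow (f i) (p j') < 0 →
      ¬ G.ResReach (fun d => G.fixCaps c0 M dP i d - f i d) (p j) (p j')) := by
  obtain ⟨hanti0, hle0⟩ := hf0
  obtain ⟨-, -, Inv⟩ :=
    Dgraph.main_inv hp hdt hdh hc0 hM hanti0 hle0 hinit hstep i hi
  refine ⟨Inv, fun j j' hj hj' hpos hneg => ?_⟩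
  have hne : (j:ℕ) ≠ (j':ℕ) := fun h => by
    rw [show j = j' from Fin.ext h] at hpos
    linarith
  rcases lt_or_gt_of_ne hne with h | h
  · exact (Inv j j' hj (Fin.lt_def.mpr h)).1 hpos
  · exact (Inv j' j hj' (Fin.lt_def.mpr h)).2 hneg
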